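/- Bias decomposition: for any estimated propensities p̂ > 0 and imputations ê, E_O[E^DR] − P = (1/|D|) Σ_{(u,i)∈D} ((p_{u,i} − p̂_{u,i})/p̂_{u,i}) (e_{u,i} − ê_{u,i}), so the DR bias is controlled by the product of propensity errors and imputation errors; in particular, by Cauchy–Schwarz, |E_O[E^DR] − P| ≤ (1/|D|) sqrt( Σ Δ_{u,i}² ) · sqrt( Σ δ_{u,i}² ). -/
import Mathlib


open Finset

/-- Expectation over independent Bernoulli observation indicators. -/
noncomputable def expVal {D : Type*} [Fintype D] [DecidableEq D] (p : D → ℝ) (f : (D → Bool) → ℝ) : ℝ :=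
  ∑ o : D → Bool, (∏ d, if o d then p d else 1 - p d) * f o

lemma sum_prod_bool {D : Type*} [Fintype D] [DecidableEq D] (g : D → Bool → ℝ) :
    ∑ o : D → Bool, ∏ d, g d (o d) = ∏ d, (g d true + g d false) := by
  rw [← Fintype.prod_sum g]
  exact Fintype.prod_congr _ _ fun d => by simp

lemma expVal_weight_sum {D : Type*} [Fintype D] [DecidableEq D] (p : D → ℝ) :
    ∑ o : D → Bool, (∏ d, if o d then p d else 1 - p d) = 1 := by
  rw [sum_prod_bool (fun d b => if b then p d else 1 - p d)]
  simp

lemma expVal_indicator {D : Type*} [Fintype D] [DecidableEq D] (p : D → ℝ) (d0 : D) :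
    ∑ o : D → Bool, (∏ d, if o d then p d else 1 - p d) * (if o d0 then (1:ℝ) else 0)
      = p d0 := by
  have h : ∀ o : D → Bool,
      (∏ d, if o d then p d else 1 - p d) * (if o d0 then (1:ℝ) else 0)
      = ∏ d, ((if o d then p d else 1 - p d) * (if d = d0 then (if o d then (1:ℝ) else 0) else 1)) := by
    intro o
    rw [Finset.prod_mul_distrib]
    congr 1
    rw [Finset.prod_eq_single d0 (by intro b _ hb; simp [hb]) (by simp)]
    simp
  simp_rw [h]
  rw [sum_prod_bool (fun d b => (if b then p d else 1 - p d) * (if d = d0 then (if b then (1:ℝ) else 0) else 1))]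
  rw [Finset.prod_eq_single d0 ?_ (by simp)]
  · simp
  · intro b _ hb; simp [hb]

/-- Bias decomposition of the DR estimator, and the Cauchy–Schwarz bound on the bias. -/
theorem dr_bias_decomposition {D : Type*} [Fintype D] [DecidableEq D] [Nonempty D]
    (e ehat p phat : D → ℝ)
    (hp : ∀ d, 0 < p d ∧ p d ≤ 1) (hphat : ∀ d, 0 < phat d) :
    expVal p (fun o => (Fintype.card D : ℝ)⁻¹ *
        ∑ d, (ehat d + (if o d then (1 : ℝ) else 0) * (e d - ehat d) / phat d))
      - (Fintype.card D : ℝ)⁻¹ * ∑ d, e d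
      = (Fintype.card D : ℝ)⁻¹ * ∑ d, ((p d - phat d) / phat d) * (e d - ehat d) ∧
    |expVal p (fun o => (Fintype.card D : ℝ)⁻¹ *
        ∑ d, (ehat d + (if o d then (1 : ℝ) else 0) * (e d - ehat d) / phat d))
      - (Fintype.card D : ℝ)⁻¹ * ∑ d, e d|
      ≤ (Fintype.card D : ℝ)⁻¹ * Real.sqrt (∑ d, ((p d - phat d) / phat d) ^ 2) *
          Real.sqrt (∑ d, (e d - ehat d) ^ 2) := by
  have hc : (0:ℝ) < (Fintype.card D : ℝ) := by
    exact_mod_cast Fintype.card_pos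
  have key : expVal p (fun o => (Fintype.card D : ℝ)⁻¹ *
        ∑ d, (ehat d + (if o d then (1 : ℝ) else 0) * (e d - ehat d) / phat d))
      - (Fintype.card D : ℝ)⁻¹ * ∑ d, e d
      = (Fintype.card D : ℝ)⁻¹ * ∑ d, ((p d - phat d) / phat d) * (e d - ehat d) := by
    unfold expVal
    have h1 : ∀ o : D → Bool,
        (∏ d, if o d then p d else 1 - p d) * ((Fintype.card D : ℝ)⁻¹ *
          ∑ d, (ehat d + (if o d then (1 : ℝ) else 0) * (e d - ehat d) / phat d))
        = (Fintype.card D : ℝ)⁻¹ * ∑ d,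
            ((∏ d', if o d' then p d' else 1 - p d') * ehat d
             + ((∏ d', if o d' then p d' else 1 - p d') * (if o d then (1:ℝ) else 0))
                * ((e d - ehat d) / phat d)) := by
      intro o
      rw [mul_left_comm, Finset.mul_sum]
      congr 1
      exact Finset.sum_congr rfl fun d _ => by ring
    simp_rw [h1]
    rw [← Finset.mul_sum, Finset.sum_comm]
    have h2 : ∀ d, ∑ o : D → Bool,
        ((∏ d', if o d' then p d' else 1 - p d') * ehat d
         + ((∏ d', if o d' then p d' else 1 - p d') * (if o d then (1:ℝ) else 0))
            * ((e d - ehat d) / phat d))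
        = ehat d + p d * ((e d - ehat d) / phat d) := by
      intro d
      rw [Finset.sum_add_distrib, ← Finset.sum_mul, expVal_weight_sum, ← Finset.sum_mul,
        expVal_indicator]
      ring
    simp_rw [h2]
    rw [← mul_sub, ← Finset.sum_sub_distrib]
    congr 1
    apply Finset.sum_congr rfl
    intro d _
    have h := (hphat d).ne'
    field_simp
    ring
  refine ⟨key, ?_⟩
  rw [key, abs_mul, abs_of_nonneg (by positivity : (0:ℝ) ≤ (Fintype.card D : ℝ)⁻¹), mul_assoc]
  apply mul_le_mul_of_nonneg_left ?_ (by positivity)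
  calc |∑ d, ((p d - phat d) / phat d) * (e d - ehat d)|
      ≤ ∑ d, |((p d - phat d) / phat d) * (e d - ehat d)| := Finset.abs_sum_le_sum_abs _ _
    _ = ∑ d, |(p d - phat d) / phat d| * |e d - ehat d| := by simp_rw [abs_mul]
    _ ≤ Real.sqrt (∑ d, |(p d - phat d) / phat d| ^ 2) * Real.sqrt (∑ d, |e d - ehat d| ^ 2) :=
        Real.sum_mul_le_sqrt_mul_sqrt _ _ _
    _ = Real.sqrt (∑ d, ((p d - phat d) / phat d) ^ 2) * Real.sqrt (∑ d, (e d - ehat d) ^ 2) := by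
        simp_rw [sq_abs]
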